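/- Σ_{n=0}^∞ (2/3)_n / ((-8)^n · (7/6)_n) = √3 · 2^{2/3} · (Γ(1/3))³ / (18π), where the series converges absolutely. -/

import Mathlib

open Real MeasureTheory Set Filter

/-- Rising factorial (Pochhammer symbol): `(a)_n = ∏_{i=0}^{n-1} (a + i)`. -/
noncomputable def risingFactorial (a : ℝ) (n : ℕ) : ℝ := ∏ i ∈ Finset.range n, (a + i)

lemma rf_zero (a : ℝ) : risingFactorial a 0 = 1 := by simp [risingFactorial]

lemma rf_succ (a : ℝ) (n : ℕ) :
    risingFactorial a (n + 1) = risingFactorial a n * (a + n) := by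
  simp [risingFactorial, Finset.prod_range_succ]

lemma rf_pos {a : ℝ} (ha : 0 < a) (n : ℕ) : 0 < risingFactorial a n := by
  induction n with
  | zero => simp [rf_zero]
  | succ n ih => rw [rf_succ]; positivity

lemma rf_le_rf {a b : ℝ} (ha : 0 < a) (hab : a ≤ b) (n : ℕ) :
    risingFactorial a n ≤ risingFactorial b n := by
  apply Finset.prod_le_prod
  · intro i _; positivity
  · intro i _; linarith

lemma rf_one (n : ℕ) : risingFactorial 1 n = n.factorial := by
  induction n with
  | zero => simp [rf_zero]
  | succ n ih => rw [rf_succ, ih, Nat.factorial_succ]; push_cast; ring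

lemma Gamma_add_nat {a : ℝ} (ha : 0 < a) (n : ℕ) :
    Real.Gamma (a + n) = risingFactorial a n * Real.Gamma a := by
  induction n with
  | zero => simp [rf_zero]
  | succ n ih =>
    have h1 : a + (n + 1 : ℕ) = (a + n) + 1 := by push_cast; ring
    have h2 : a + (n : ℝ) ≠ 0 := by positivity
    rw [h1, Real.Gamma_add_one h2, ih, rf_succ]; ring


lemma beta_integrand_eq {p q : ℝ} (x : ℝ) (hx : x ∈ Ioo (0:ℝ) 1) :
    (x:ℂ) ^ ((p:ℂ) - 1) * (1 - (x:ℂ)) ^ ((q:ℂ) - 1)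
      = ((x ^ (p-1) * (1-x) ^ (q-1) : ℝ) : ℂ) := by
  obtain ⟨h0, h1⟩ := hx
  rw [show ((p:ℂ) - 1) = ((p - 1 : ℝ) : ℂ) by push_cast; ring,
    show ((q:ℂ) - 1) = ((q - 1 : ℝ) : ℂ) by push_cast; ring,
    show (1 - (x:ℂ)) = ((1 - x : ℝ) : ℂ) by push_cast; ring,
    ← Complex.ofReal_cpow h0.le, ← Complex.ofReal_cpow (by linarith), Complex.ofReal_mul]

lemma complex_beta_eq_real {p q : ℝ} (hp : 0 < p) (hq : 0 < q) :
    Complex.betaIntegral p q = ((∫ x in Ioo (0:ℝ) 1, x ^ (p-1) * (1-x) ^ (q-1)) : ℝ) := by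
  rw [Complex.betaIntegral, intervalIntegral.integral_of_le zero_le_one,
    ← setIntegral_congr_set Ioo_ae_eq_Ioc]
  rw [setIntegral_congr_fun measurableSet_Ioo (fun x hx => beta_integrand_eq x hx)]
  exact integral_ofReal

lemma real_beta {p q : ℝ} (hp : 0 < p) (hq : 0 < q) :
    ∫ x in Ioo (0:ℝ) 1, x ^ (p-1) * (1-x) ^ (q-1)
      = Real.Gamma p * Real.Gamma q / Real.Gamma (p + q) := by
  have h := Complex.Gamma_mul_Gamma_eq_betaIntegral (s := p) (t := q) (by simpa using hp) (by simpa using hq)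
  rw [complex_beta_eq_real hp hq] at h
  have hpq : (0:ℝ) < p + q := by linarith
  have hG : Real.Gamma (p + q) ≠ 0 := (Real.Gamma_pos_of_pos hpq).ne'
  have : Real.Gamma p * Real.Gamma q = Real.Gamma (p+q) * ∫ x in Ioo (0:ℝ) 1, x ^ (p-1) * (1-x) ^ (q-1) := by
    have := h
    rw [show ((p:ℂ) + q) = ((p + q : ℝ) : ℂ) by push_cast; ring] at this
    rw [Complex.Gamma_ofReal, Complex.Gamma_ofReal, Complex.Gamma_ofReal] at this
    exact_mod_cast this
  field_simp [this]
  linear_combination -this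

lemma real_beta_integrable {p q : ℝ} (hp : 0 < p) (hq : 0 < q) :
    IntegrableOn (fun x : ℝ => x ^ (p-1) * (1-x) ^ (q-1)) (Ioo 0 1) := by
  have h := Complex.betaIntegral_convergent (u := p) (v := q) (by simpa using hp) (by simpa using hq)
  have h2 : IntegrableOn (fun x : ℝ => (x:ℂ) ^ ((p:ℂ) - 1) * (1 - (x:ℂ)) ^ ((q:ℂ) - 1)) (Ioo 0 1) :=
    (h.1.mono_set Ioo_subset_Ioc_self)
  have h3 : IntegrableOn (fun x : ℝ => ((x ^ (p-1) * (1-x) ^ (q-1) : ℝ) : ℂ)) (Ioo 0 1) :=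
    h2.congr_fun (fun x hx => beta_integrand_eq x hx) measurableSet_Ioo
  have h4 : IntegrableOn (fun x : ℝ => Complex.re ((x ^ (p-1) * (1-x) ^ (q-1) : ℝ) : ℂ)) (Ioo 0 1) := h3.re
  exact h4.congr_fun (fun x hx => by simp) measurableSet_Ioo

section Binomial
variable {β x : ℝ}

private noncomputable def g (β : ℝ) (n : ℕ) : ℝ → ℝ :=
  fun t => (-1)^n * risingFactorial β n * (1+t) ^ (-β - n)

lemma g_hasDerivAt (hβ : 0 < β) (n : ℕ) {t : ℝ} (ht : 0 ≤ t) :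
    HasDerivAt (g β n) (g β (n+1) t) t := by
  have h1t : (0:ℝ) < 1 + t := by linarith
  have h : HasDerivAt (fun t : ℝ => (1+t) ^ (-β - n))
      (1 * (-β - n) * (1+t) ^ (-β - n - 1)) t :=
    HasDerivAt.rpow_const ((hasDerivAt_id t).const_add 1) (Or.inl h1t.ne')
  have h2 := h.const_mul ((-1:ℝ)^n * risingFactorial β n)
  refine h2.congr_deriv (Eq.symm ?_)
  simp only [g, rf_succ]
  rw [show (-β - (n+1:ℕ) : ℝ) = -β - n - 1 by push_cast; ring]
  push_cast; ring

lemma f_iteratedDerivWithin (hβ : 0 < β) (hx : 0 < x) (n : ℕ) {t : ℝ} (ht : t ∈ Icc 0 x) :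
    iteratedDerivWithin n (fun t : ℝ => (1+t) ^ (-β)) (Icc 0 x) t = g β n t := by
  induction n generalizing t with
  | zero => simp [g, rf_zero, iteratedDerivWithin_zero]
  | succ n ih =>
    have hu : UniqueDiffOn ℝ (Icc (0:ℝ) x) := uniqueDiffOn_Icc hx
    rw [iteratedDerivWithin_succ]
    have : derivWithin (iteratedDerivWithin n (fun t : ℝ => (1+t) ^ (-β)) (Icc 0 x)) (Icc 0 x) t
        = derivWithin (g β n) (Icc 0 x) t :=
      derivWithin_congr (fun y hy => ih hy) (ih ht)
    rw [this]
    exact ((g_hasDerivAt hβ n ht.1).hasDerivWithinAt).derivWithin (hu.uniqueDiffWithinAt ht)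

lemma f_contDiffOn (hβ : 0 < β) (hx : 0 < x) (N : ℕ) :
    ContDiffOn ℝ N (fun t : ℝ => (1+t) ^ (-β)) (Icc 0 x) := by
  intro t ht
  have h1t : (0:ℝ) < 1 + t := by have := ht.1; linarith
  exact (ContDiffAt.rpow_const_of_ne (by fun_prop) h1t.ne').contDiffWithinAt

lemma binomial_tendsto (hβ : 0 < β) (hβ1 : β ≤ 1) (hx : 0 < x) (hx1 : x < 1) :
    Tendsto (fun N => ∑ n ∈ Finset.range N, risingFactorial β n * (-x)^n / n.factorial)
      atTop (nhds ((1+x) ^ (-β))) := by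
  set f : ℝ → ℝ := fun t => (1+t) ^ (-β) with hf
  have key : ∀ N : ℕ, |f x - ∑ n ∈ Finset.range (N+1), risingFactorial β n * (-x)^n / n.factorial|
      ≤ x ^ (N+1) := by
    intro N
    have hdiff : DifferentiableOn ℝ (iteratedDerivWithin N f (Icc 0 x)) (Ioo 0 x) :=
      (fun t ht => ((g_hasDerivAt hβ N (le_of_lt ht.1)).differentiableAt.differentiableWithinAt).congr
        (fun y hy => f_iteratedDerivWithin hβ hx N (Ioo_subset_Icc_self hy))
        (f_iteratedDerivWithin hβ hx N (Ioo_subset_Icc_self ht)))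
    obtain ⟨x', hx', hEq⟩ := taylor_mean_remainder_lagrange (f := f) (x₀ := 0) (n := N) hx.ne
      (by rw [uIcc_of_le hx.le]; exact f_contDiffOn hβ hx N)
      (by rw [uIcc_of_le hx.le, uIoo_of_le hx.le]; exact hdiff)
    rw [uIcc_of_le hx.le] at hEq
    rw [uIoo_of_le hx.le] at hx'
    have hTay : taylorWithinEval f N (Icc 0 x) 0 x
        = ∑ n ∈ Finset.range (N+1), risingFactorial β n * (-x)^n / n.factorial := by
      rw [taylor_within_apply]
      apply Finset.sum_congr rfl
      intro k hk
      rw [f_iteratedDerivWithin hβ hx k (left_mem_Icc.mpr hx.le)]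
      simp only [g, sub_zero, smul_eq_mul]
      rw [show (1:ℝ) + 0 = 1 by ring, Real.one_rpow, neg_pow]
      ring
    rw [hTay] at hEq
    rw [hEq, f_iteratedDerivWithin hβ hx (N+1) (Ioo_subset_Icc_self hx')]
    have h1 : (0:ℝ) < 1 + x' := by have := hx'.1; linarith
    have hb1 : (1+x') ^ (-β - (N+1:ℕ)) ≤ 1 := by
      apply Real.rpow_le_one_of_one_le_of_nonpos (by have := hx'.1; linarith)
      have hN : (0:ℝ) ≤ (N:ℝ) := Nat.cast_nonneg N
      push_cast; linarith
    have hb2 : risingFactorial β (N+1) ≤ (N+1).factorial := by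
      have := rf_le_rf hβ hβ1 (N+1); rw [rf_one] at this; exact this
    have hrfp := (rf_pos hβ (N+1)).le
    have hrp : (0:ℝ) ≤ (1+x') ^ (-β - (N+1:ℕ)) := Real.rpow_nonneg h1.le _
    simp only [g, sub_zero]
    have habs : |(-1:ℝ)^(N+1) * risingFactorial β (N+1) * (1+x') ^ (-β - ((N+1:ℕ):ℝ)) * x^(N+1)
        / ((N+1).factorial : ℝ)|
        = risingFactorial β (N+1) * (1+x') ^ (-β - ((N+1:ℕ):ℝ)) * x^(N+1)
        / ((N+1).factorial : ℝ) := by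
      rw [abs_div]
      congr 1
      · rw [abs_mul, abs_mul, abs_mul, abs_pow, abs_neg, abs_one, one_pow, one_mul,
          abs_of_nonneg hrfp, abs_of_nonneg hrp, abs_pow, abs_of_nonneg hx.le]
      · rw [Nat.abs_cast]
    rw [habs, div_le_iff₀ (by positivity)]
    calc risingFactorial β (N+1) * (1+x') ^ (-β - (N+1:ℕ)) * x^(N+1)
        ≤ ((N+1).factorial : ℝ) * 1 * x^(N+1) := by
          apply mul_le_mul_of_nonneg_right _ (by positivity)
          exact mul_le_mul hb2 hb1 hrp (by positivity)
      _ = x^(N+1) * ((N+1).factorial : ℝ) := by ring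
  -- squeeze
  rw [tendsto_iff_dist_tendsto_zero]
  apply squeeze_zero' (by filter_upwards with N; positivity)
    (f := fun N => dist (∑ n ∈ Finset.range N, risingFactorial β n * (-x)^n / n.factorial) (f x))
    (g := fun N => x ^ N)
  · filter_upwards [eventually_ge_atTop 1] with N hN
    obtain ⟨M, rfl⟩ := Nat.exists_eq_add_of_le hN
    rw [Real.dist_eq, abs_sub_comm]
    rw [show 1 + M = M + 1 by ring]
    exact key M
  · exact tendsto_pow_atTop_nhds_zero_of_lt_one hx.le hx1

lemma binomial_hasSum (hβ : 0 < β) (hβ1 : β ≤ 1) (hx : 0 < x) (hx1 : x < 1) :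
    HasSum (fun n => risingFactorial β n * (-x)^n / n.factorial) ((1+x) ^ (-β)) := by
  have hsumm : Summable (fun n => risingFactorial β n * (-x)^n / n.factorial) := by
    apply Summable.of_abs
    apply Summable.of_nonneg_of_le (fun n => abs_nonneg _) (fun n => ?_)
      (summable_geometric_of_lt_one hx.le hx1)
    rw [abs_div, abs_mul, abs_pow, abs_neg, abs_of_nonneg hx.le,
      abs_of_nonneg (rf_pos hβ n).le, abs_of_nonneg (by positivity : (0:ℝ) ≤ (n.factorial:ℝ))]
    rw [div_le_iff₀ (by positivity)]
    have hb2 : risingFactorial β n ≤ n.factorial := by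
      have := rf_le_rf hβ hβ1 n; rw [rf_one] at this; exact this
    calc risingFactorial β n * x^n ≤ (n.factorial:ℝ) * x^n :=
          mul_le_mul_of_nonneg_right hb2 (by positivity)
      _ = x^n * n.factorial := by ring
  have h1 := hsumm.hasSum
  have h2 := h1.tendsto_sum_nat
  have h3 := binomial_tendsto hβ hβ1 hx hx1
  rwa [tendsto_nhds_unique h2 h3] at h1



lemma Bn_eq (n : ℕ) : ∫ x in Ioo (0:ℝ) 1, x^n * (1-x) ^ (-5/6 : ℝ)
    = 6 * n.factorial / risingFactorial (7/6) n := by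
  have h := real_beta (p := n+1) (q := 1/6) (by positivity) (by norm_num)
  have hcong : ∀ x ∈ Ioo (0:ℝ) 1, x ^ (((n:ℝ)+1)-1) * (1-x) ^ ((1/6 : ℝ)-1)
      = x^n * (1-x) ^ (-5/6 : ℝ) := by
    intro x hx
    rw [show ((n:ℝ)+1)-1 = (n:ℝ) by ring, Real.rpow_natCast,
      show (1/6 : ℝ)-1 = -5/6 by norm_num]
  rw [setIntegral_congr_fun measurableSet_Ioo hcong] at h
  rw [h]
  have h1 : Real.Gamma ((n:ℝ)+1) = n.factorial := Real.Gamma_nat_eq_factorial n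
  have h2 : Real.Gamma ((n:ℝ)+1+1/6) = risingFactorial (7/6) n * Real.Gamma (7/6) := by
    rw [show (n:ℝ)+1+1/6 = 7/6 + n by ring]
    exact Gamma_add_nat (by norm_num) n
  have h3 : Real.Gamma (7/6 : ℝ) = (1/6) * Real.Gamma (1/6) := by
    rw [show (7/6 : ℝ) = 1/6 + 1 by norm_num, Real.Gamma_add_one (by norm_num)]
  have hGpos : 0 < Real.Gamma (1/6 : ℝ) := Real.Gamma_pos_of_pos (by norm_num)
  have hrf : 0 < risingFactorial (7/6 : ℝ) n := rf_pos (by norm_num) n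
  rw [h1, h2, h3]
  field_simp

lemma Bn_integrable (n : ℕ) :
    IntegrableOn (fun x : ℝ => x^n * (1-x) ^ (-5/6 : ℝ)) (Ioo 0 1) := by
  have h := real_beta_integrable (p := n+1) (q := 1/6) (by positivity) (by norm_num)
  apply h.congr_fun _ measurableSet_Ioo
  intro x hx
  simp only [show ((n:ℝ)+1)-1 = (n:ℝ) from by ring, Real.rpow_natCast,
      show (1/6 : ℝ)-1 = -5/6 from by norm_num]

noncomputable def Fn (n : ℕ) : ℝ → ℝ := fun t =>
  ((1/6 : ℝ) * (risingFactorial (2/3) n * (-1/8 : ℝ)^n / n.factorial))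
    * (t^n * (1-t) ^ (-5/6 : ℝ))

lemma Fn_integral (n : ℕ) : ∫ t in Ioo (0:ℝ) 1, Fn n t
    = risingFactorial (2/3) n / ((-8 : ℝ)^n * risingFactorial (7/6) n) := by
  simp only [Fn]
  rw [integral_const_mul, Bn_eq]
  have hrf : (0:ℝ) < risingFactorial (7/6 : ℝ) n := rf_pos (by norm_num) n
  have hfac : (0:ℝ) < (n.factorial : ℝ) := by positivity
  have h8 : ((-8 : ℝ)^n) ≠ 0 := by positivity
  have : (-1/8 : ℝ)^n = ((-8 : ℝ)^n)⁻¹ := by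
    rw [show (-1/8 : ℝ) = (-8 : ℝ)⁻¹ by norm_num, inv_pow]
  rw [this]
  field_simp

lemma Fn_tsum (t : ℝ) (ht : t ∈ Ioo (0:ℝ) 1) :
    ∑' n, Fn n t = (1/6 : ℝ) * ((1-t) ^ (-5/6 : ℝ) * (1+t/8) ^ (-2/3 : ℝ)) := by
  have hb := binomial_hasSum (β := 2/3) (x := t/8) (by norm_num) (by norm_num)
    (by have := ht.1; linarith) (by have := ht.2; linarith)
  have hb2 := (hb.mul_left ((1/6 : ℝ) * (1-t) ^ (-5/6 : ℝ))).tsum_eq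
  rw [show ((1:ℝ)+t/8) ^ (-2/3 : ℝ) = (1+t/8) ^ (-(2/3) : ℝ) from by norm_num,
    show (1/6 : ℝ) * ((1-t) ^ (-5/6 : ℝ) * (1+t/8) ^ (-(2/3) : ℝ))
      = (1/6 : ℝ) * (1-t) ^ (-5/6 : ℝ) * (1+t/8) ^ (-(2/3) : ℝ) from by ring, ← hb2]
  apply tsum_congr
  intro n
  simp only [Fn]
  have : (-(t/8))^n = (-1/8 : ℝ)^n * t^n := by
    rw [show -(t/8) = (-1/8 : ℝ) * t by ring, mul_pow]
  rw [this]
  ring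

lemma step1 : ∑' n : ℕ, risingFactorial (2/3) n / ((-8 : ℝ)^n * risingFactorial (7/6) n)
    = ∫ t in Ioo (0:ℝ) 1, (1/6 : ℝ) * ((1-t) ^ (-5/6 : ℝ) * (1+t/8) ^ (-2/3 : ℝ)) := by
  have hmeas : ∀ n : ℕ, AEStronglyMeasurable (Fn n) (volume.restrict (Ioo (0:ℝ) 1)) := by
    intro n
    apply ContinuousOn.aestronglyMeasurable _ measurableSet_Ioo
    have hc : ContinuousOn (fun t : ℝ => t^n * (1-t) ^ (-5/6 : ℝ)) (Ioo 0 1) := by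
      apply (continuousOn_pow n).mul
      apply ContinuousOn.rpow_const (continuousOn_const.sub continuousOn_id)
      intro x hx
      exact Or.inl (fun h => absurd (sub_eq_zero.mp h).symm (ne_of_lt hx.2))
    exact continuousOn_const.mul hc
  have hbound : ∑' n : ℕ, ∫⁻ t, ‖Fn n t‖₊ ∂(volume.restrict (Ioo (0:ℝ) 1)) ≠ ⊤ := by
    have hval : ∀ n : ℕ, ∫⁻ t, ‖Fn n t‖₊ ∂(volume.restrict (Ioo (0:ℝ) 1))
        ≤ ENNReal.ofReal ((1/8 : ℝ)^n) := by
      intro n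
      have hint : Integrable (Fn n) (volume.restrict (Ioo (0:ℝ) 1)) :=
        (Bn_integrable n).const_mul _
      simp only [← enorm_eq_nnnorm]
      rw [← ofReal_integral_norm_eq_lintegral_enorm hint]
      apply ENNReal.ofReal_le_ofReal
      have hpoint : ∀ t ∈ Ioo (0:ℝ) 1, ‖Fn n t‖
          = ((1/6 : ℝ) * (risingFactorial (2/3) n * (1/8 : ℝ)^n / n.factorial))
            * (t^n * (1-t) ^ (-5/6 : ℝ)) := by
        intro t ht
        have h1 : (0:ℝ) ≤ t^n := pow_nonneg ht.1.le n
        have h2 : (0:ℝ) ≤ (1-t) ^ (-5/6 : ℝ) :=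
          Real.rpow_nonneg (by have := ht.2; linarith) _
        simp only [Fn, Real.norm_eq_abs]
        rw [abs_mul, abs_of_nonneg (mul_nonneg h1 h2)]
        congr 1
        rw [abs_mul, abs_of_nonneg (by norm_num : (0:ℝ) ≤ (1/6 : ℝ)), abs_div, abs_mul,
          abs_of_nonneg (rf_pos (by norm_num : (0:ℝ) < 2/3) n).le, Nat.abs_cast, abs_pow,
          show |(-1/8 : ℝ)| = 1/8 from by norm_num]
      rw [setIntegral_congr_fun measurableSet_Ioo hpoint, integral_const_mul, Bn_eq]
      have hrf76 : (0:ℝ) < risingFactorial (7/6) n := rf_pos (by norm_num) n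
      have hrf23 : (0:ℝ) < risingFactorial (2/3) n := rf_pos (by norm_num) n
      have h23 : risingFactorial (2/3) n ≤ risingFactorial (7/6) n :=
        rf_le_rf (by norm_num) (by norm_num) n
      have hfac : (0:ℝ) < (n.factorial : ℝ) := by positivity
      have heq : (1/6 : ℝ) * (risingFactorial (2/3) n * (1/8)^n / n.factorial)
          * (6 * n.factorial / risingFactorial (7/6) n)
          = (risingFactorial (2/3) n / risingFactorial (7/6) n) * (1/8)^n := by
        field_simp
      rw [heq]
      calc (risingFactorial (2/3) n / risingFactorial (7/6) n) * (1/8 : ℝ)^n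
          ≤ 1 * (1/8 : ℝ)^n := by
            apply mul_le_mul_of_nonneg_right _ (by positivity)
            exact (div_le_one hrf76).mpr h23
        _ = (1/8 : ℝ)^n := one_mul _
    apply ne_of_lt (lt_of_le_of_lt (ENNReal.tsum_le_tsum hval) _)
    have hgeo : ∑' n : ℕ, ENNReal.ofReal ((1/8 : ℝ)^n)
        = ∑' n : ℕ, (ENNReal.ofReal (1/8 : ℝ))^n :=
      tsum_congr fun n => ENNReal.ofReal_pow (by norm_num) n
    rw [hgeo, ENNReal.tsum_geometric]
    have hr : ENNReal.ofReal (1/8 : ℝ) < 1 := by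
      rw [← ENNReal.ofReal_one]
      exact (ENNReal.ofReal_lt_ofReal_iff (by norm_num)).mpr (by norm_num)
    exact ENNReal.inv_lt_top.mpr (tsub_pos_iff_lt.mpr hr)
  calc ∑' n : ℕ, risingFactorial (2/3) n / ((-8 : ℝ)^n * risingFactorial (7/6) n)
      = ∑' n : ℕ, ∫ t in Ioo (0:ℝ) 1, Fn n t := tsum_congr fun n => (Fn_integral n).symm
    _ = ∫ t in Ioo (0:ℝ) 1, ∑' n : ℕ, Fn n t := (integral_tsum hmeas hbound).symm
    _ = ∫ t in Ioo (0:ℝ) 1, (1/6 : ℝ) * ((1-t) ^ (-5/6 : ℝ) * (1+t/8) ^ (-2/3 : ℝ)) :=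
        setIntegral_congr_fun measurableSet_Ioo (fun t ht => Fn_tsum t ht)


lemma div8_rpow (A : ℝ) (hA : 0 ≤ A) : (A/8) ^ (-2/3 : ℝ) = 4 * A ^ (-2/3 : ℝ) := by
  rw [Real.div_rpow hA (by norm_num : (0:ℝ) ≤ 8)]
  have h8 : (8:ℝ) ^ (-2/3 : ℝ) = 1/4 := by
    rw [show (-2/3 : ℝ) = -(2/3) by ring, Real.rpow_neg (by norm_num)]
    have : (8:ℝ) ^ ((2:ℝ)/3) = 4 := by
      rw [show (8:ℝ) = 2^(3:ℕ) by norm_num, ← Real.rpow_natCast 2 3,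
        ← Real.rpow_mul (by norm_num : (0:ℝ) ≤ 2),
        show ((3:ℕ):ℝ) * (2/3) = ((2:ℕ):ℝ) by push_cast; norm_num, Real.rpow_natCast]
      norm_num
    rw [this]; norm_num
  rw [h8]
  ring

lemma step2 : ∫ t in Ioo (0:ℝ) 1, (1/6 : ℝ) * ((1-t) ^ (-5/6 : ℝ) * (1+t/8) ^ (-2/3 : ℝ))
    = ∫ s in Ioo (0:ℝ) 1, 4 * (9 - s^6) ^ (-2/3 : ℝ) := by
  set φ : ℝ → ℝ := fun s => 1 - s^6 with hφ
  have hder : ∀ s ∈ Ioo (0:ℝ) 1, HasDerivWithinAt φ (-(6 * s^5)) (Ioo 0 1) s := by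
    intro s hs
    have h := (hasDerivAt_pow 6 s).const_sub 1
    have h2 : HasDerivAt φ (-(6 * s^5)) s := by simpa using h
    exact h2.hasDerivWithinAt
  have hinj : InjOn φ (Ioo (0:ℝ) 1) := by
    intro a ha b hb h
    simp only [hφ] at h
    have h6 : a^6 = b^6 := by linarith
    rcases lt_trichotomy a b with hlt | heq | hgt
    · exact absurd h6 (ne_of_lt (pow_lt_pow_left₀ hlt ha.1.le (by norm_num)))
    · exact heq
    · exact absurd h6.symm (ne_of_lt (pow_lt_pow_left₀ hgt hb.1.le (by norm_num)))
  have himg : φ '' (Ioo (0:ℝ) 1) = Ioo 0 1 := by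
    apply Subset.antisymm
    · rintro _ ⟨s, hs, rfl⟩
      constructor
      · simp only [hφ, sub_pos]
        exact pow_lt_one₀ hs.1.le hs.2 (by norm_num)
      · simp only [hφ, sub_lt_self_iff]
        exact pow_pos hs.1 6
    · have hcont : ContinuousOn φ (Icc (0:ℝ) 1) := by fun_prop
      have := intermediate_value_Ioo' (le_of_lt zero_lt_one) hcont
      simp only [hφ] at this ⊢
      simpa using this
  conv_lhs => rw [← himg]
  rw [integral_image_eq_integral_abs_deriv_smul measurableSet_Ioo hder hinj]
  apply setIntegral_congr_fun measurableSet_Ioo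
  intro s hs
  have hs0 := hs.1
  have hs1 := hs.2
  have hs6 : s^6 < 1 := pow_lt_one₀ hs0.le hs1 (by norm_num)
  have e1 : (1:ℝ) - (1 - s^6) = s^6 := by ring
  have e2 : (1:ℝ) + (1 - s^6)/8 = (9 - s^6)/8 := by ring
  simp only [hφ, smul_eq_mul]
  rw [e1, e2, div8_rpow _ (by nlinarith)]
  have e3 : (s^6 : ℝ) ^ (-5/6 : ℝ) = s ^ (-5 : ℝ) := by
    rw [← Real.rpow_natCast s 6, ← Real.rpow_mul hs0.le]
    norm_num
  rw [e3]
  have e4 : |(-(6 * s^5))| = 6 * s^5 := by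
    rw [abs_neg, abs_of_nonneg (by positivity)]
  rw [e4]
  have e5 : s ^ (-5 : ℝ) * s^5 = 1 := by
    rw [← Real.rpow_natCast s 5, ← Real.rpow_add hs0]
    norm_num
  have : 6 * s^5 * ((1:ℝ)/6 * (s ^ (-5:ℝ) * (4 * (9 - s^6) ^ (-2/3 : ℝ))))
      = (s ^ (-5:ℝ) * s^5) * (4 * (9 - s^6) ^ (-2/3 : ℝ)) := by ring
  rw [this, e5, one_mul]

noncomputable def cc : ℝ := 2 ^ (-1/3 : ℝ)

lemma cc_pos : 0 < cc := Real.rpow_pos_of_pos (by norm_num) _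
lemma cc_lt_one : cc < 1 :=
  Real.rpow_lt_one_of_one_lt_of_neg (by norm_num) (by norm_num)
lemma cc_cube : cc ^ 3 = 1/2 := by
  rw [cc, ← Real.rpow_natCast ((2:ℝ) ^ (-1/3 : ℝ)) 3, ← Real.rpow_mul (by norm_num : (0:ℝ) ≤ 2),
    show (-1/3 : ℝ) * ((3:ℕ):ℝ) = -1 by push_cast; norm_num, Real.rpow_neg_one]
  norm_num

noncomputable def phi3 : ℝ → ℝ := fun s => 2 ^ ((1:ℝ)/3) * (s * (3 + s^3) ^ (-1/3 : ℝ))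

lemma aux3 {s : ℝ} (hs : 0 ≤ s) : (0:ℝ) < 3 + s^3 := by nlinarith [pow_nonneg hs 3]

lemma phi3_cube {s : ℝ} (hs : 0 ≤ s) : (phi3 s)^3 = 2 * s^3 / (3 + s^3) := by
  have hA : (0:ℝ) < 3 + s^3 := aux3 hs
  rw [phi3, mul_pow, mul_pow,
    ← Real.rpow_natCast ((2:ℝ) ^ ((1:ℝ)/3)) 3, ← Real.rpow_mul (by norm_num : (0:ℝ) ≤ 2),
    ← Real.rpow_natCast ((3 + s^3) ^ (-1/3 : ℝ)) 3, ← Real.rpow_mul hA.le,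
    show ((1:ℝ)/3) * ((3:ℕ):ℝ) = 1 by push_cast; norm_num,
    show (-1/3 : ℝ) * ((3:ℕ):ℝ) = -1 by push_cast; norm_num,
    Real.rpow_one, Real.rpow_neg_one]
  field_simp

lemma phi3_hasDerivAt {s : ℝ} (hs : 0 ≤ s) :
    HasDerivAt phi3 (3 * 2 ^ ((1:ℝ)/3) * (3 + s^3) ^ (-4/3 : ℝ)) s := by
  have hA : (0:ℝ) < 3 + s^3 := aux3 hs
  have h1 : HasDerivAt (fun s : ℝ => 3 + s^3) (3 * s^2) s := by
    simpa using (hasDerivAt_pow 3 s).const_add 3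
  have h2 : HasDerivAt (fun s : ℝ => (3 + s^3) ^ (-1/3 : ℝ))
      (3 * s^2 * (-1/3 : ℝ) * (3 + s^3) ^ ((-1/3 : ℝ) - 1)) s :=
    h1.rpow_const (Or.inl hA.ne')
  have h3 := ((hasDerivAt_id s).mul h2).const_mul ((2:ℝ) ^ ((1:ℝ)/3))
  refine h3.congr_deriv (Eq.symm ?_)
  have key : (3 + s^3 : ℝ) ^ (-1/3 : ℝ) = (3 + s^3) * (3 + s^3) ^ (-4/3 : ℝ) := by
    rw [show (-1/3 : ℝ) = 1 + (-4/3) by norm_num, Real.rpow_add hA, Real.rpow_one]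
  rw [show ((-1/3 : ℝ) - 1) = (-4/3 : ℝ) by norm_num, key]
  simp only [id_eq]
  ring

lemma phi3_mem {s : ℝ} (hs : s ∈ Ioo (0:ℝ) 1) : phi3 s ∈ Ioo 0 cc := by
  have hA : (0:ℝ) < 3 + s^3 := aux3 hs.1.le
  have hp1 := Real.rpow_pos_of_pos hA (-1/3 : ℝ)
  have hp2 := Real.rpow_pos_of_pos (by norm_num : (0:ℝ) < 2) ((1:ℝ)/3)
  have hs0 := hs.1
  constructor
  · rw [phi3]; positivity
  · have hcube : (phi3 s)^3 < cc^3 := by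
      rw [phi3_cube hs.1.le, cc_cube, div_lt_iff₀ hA]
      have hs3 : s^3 < 1 := pow_lt_one₀ hs.1.le hs.2 (by norm_num)
      nlinarith
    have h0 : 0 ≤ phi3 s := by rw [phi3]; positivity
    exact lt_of_pow_lt_pow_left₀ 3 cc_pos.le hcube

lemma phi3_inj : Set.InjOn phi3 (Ioo (0:ℝ) 1) := by
  intro a ha b hb h
  have hA : (0:ℝ) < 3 + a^3 := aux3 ha.1.le
  have hB : (0:ℝ) < 3 + b^3 := aux3 hb.1.le
  have e : 2*a^3/(3+a^3) = 2*b^3/(3+b^3) := by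
    rw [← phi3_cube ha.1.le, ← phi3_cube hb.1.le, h]
  rw [div_eq_div_iff hA.ne' hB.ne'] at e
  have h3 : a^3 = b^3 := by nlinarith
  rcases lt_trichotomy a b with hlt | heq | hgt
  · exact absurd h3 (ne_of_lt (pow_lt_pow_left₀ hlt ha.1.le (by norm_num)))
  · exact heq
  · exact absurd h3.symm (ne_of_lt (pow_lt_pow_left₀ hgt hb.1.le (by norm_num)))

lemma phi3_image : phi3 '' (Ioo (0:ℝ) 1) = Ioo 0 cc := by
  apply Subset.antisymm
  · rintro _ ⟨s, hs, rfl⟩; exact phi3_mem hs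
  · have hcont : ContinuousOn phi3 (Icc (0:ℝ) 1) := by
      apply continuousOn_const.mul
      apply continuousOn_id.mul
      apply ContinuousOn.rpow_const (by fun_prop)
      intro x hx
      exact Or.inl (ne_of_gt (aux3 hx.1))
    have hIv := intermediate_value_Ioo (le_of_lt zero_lt_one) hcont
    have h0 : phi3 0 = 0 := by simp [phi3]
    have h1 : phi3 1 = cc := by
      have h4 : ((4:ℝ)) ^ (-1/3 : ℝ) = 2 ^ (-2/3 : ℝ) := by
        rw [show (4:ℝ) = 2 ^ (2:ℕ) by norm_num, ← Real.rpow_natCast 2 2,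
          ← Real.rpow_mul (by norm_num : (0:ℝ) ≤ 2)]
        norm_num
      rw [phi3, one_pow, show (3:ℝ) + 1 = 4 by norm_num, one_mul, h4,
        ← Real.rpow_add (by norm_num : (0:ℝ) < 2), cc]
      norm_num
    rw [h0, h1] at hIv
    exact hIv

lemma step3 : ∫ u in Ioo (0:ℝ) cc, (1 - u^3) ^ (-2/3 : ℝ)
    = ∫ s in Ioo (0:ℝ) 1, (3 * 2 ^ ((1:ℝ)/3)) * (9 - s^6) ^ (-2/3 : ℝ) := by
  rw [← phi3_image, integral_image_eq_integral_abs_deriv_smul measurableSet_Ioo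
    (fun s hs => (phi3_hasDerivAt hs.1.le).hasDerivWithinAt) phi3_inj]
  apply setIntegral_congr_fun measurableSet_Ioo
  intro s hs
  have hA : (0:ℝ) < 3 + s^3 := aux3 hs.1.le
  have hs3 : s^3 < 1 := pow_lt_one₀ hs.1.le hs.2 (by norm_num)
  have hB : (0:ℝ) < 3 - s^3 := by linarith
  have hD : (0:ℝ) < 3 * 2 ^ ((1:ℝ)/3) * (3 + s^3) ^ (-4/3 : ℝ) := by
    have := Real.rpow_pos_of_pos hA (-4/3 : ℝ)
    have := Real.rpow_pos_of_pos (by norm_num : (0:ℝ) < 2) ((1:ℝ)/3)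
    positivity
  have e1 : 1 - (phi3 s)^3 = (3 - s^3) * (3 + s^3)⁻¹ := by
    rw [phi3_cube hs.1.le]; field_simp; ring
  have e2 : ((3 - s^3) * (3 + s^3)⁻¹) ^ (-2/3 : ℝ)
      = (3 - s^3) ^ (-2/3 : ℝ) * (3 + s^3) ^ ((2:ℝ)/3) := by
    rw [Real.mul_rpow hB.le (by positivity), ← Real.rpow_neg_one (3 + s^3),
      ← Real.rpow_mul hA.le]
    norm_num
  have e3 : (3 + s^3) ^ (-4/3 : ℝ) * (3 + s^3) ^ ((2:ℝ)/3) = (3 + s^3) ^ (-2/3 : ℝ) := by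
    rw [← Real.rpow_add hA]; norm_num
  have e4 : (3 - s^3) ^ (-2/3 : ℝ) * (3 + s^3) ^ (-2/3 : ℝ) = (9 - s^6) ^ (-2/3 : ℝ) := by
    rw [← Real.mul_rpow hB.le hA.le, show (3 - s^3) * (3 + s^3) = 9 - s^6 by ring]
  simp only [smul_eq_mul]
  rw [abs_of_pos hD, e1, e2]
  calc 3 * 2 ^ ((1:ℝ)/3) * (3 + s^3) ^ (-4/3 : ℝ)
      * ((3 - s^3) ^ (-2/3 : ℝ) * (3 + s^3) ^ ((2:ℝ)/3))
      = 3 * 2 ^ ((1:ℝ)/3) * ((3 - s^3) ^ (-2/3 : ℝ) * ((3 + s^3) ^ (-4/3 : ℝ) * (3 + s^3) ^ ((2:ℝ)/3))) := by ring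
    _ = 3 * 2 ^ ((1:ℝ)/3) * (9 - s^6) ^ (-2/3 : ℝ) := by rw [e3, e4]

noncomputable def psi : ℝ → ℝ := fun u => (1 - u^3) ^ ((1:ℝ)/3)

lemma psi_cube {u : ℝ} (h0 : 0 ≤ u) (h1 : u ≤ 1) : (psi u)^3 = 1 - u^3 := by
  have h : (0:ℝ) ≤ 1 - u^3 := by nlinarith [pow_le_one₀ h0 h1 (n := 3)]
  rw [psi, ← Real.rpow_natCast ((1 - u^3) ^ ((1:ℝ)/3)) 3, ← Real.rpow_mul h,
    show ((1:ℝ)/3) * ((3:ℕ):ℝ) = 1 by push_cast; norm_num, Real.rpow_one]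

lemma psi_hasDerivAt {u : ℝ} (hu : u ∈ Ioo cc 1) :
    HasDerivAt psi (-(3*u^2) * ((1:ℝ)/3) * (1 - u^3) ^ (((1:ℝ)/3) - 1)) u := by
  have h0 : 0 < u := lt_trans cc_pos hu.1
  have h : (0:ℝ) < 1 - u^3 := by nlinarith [pow_lt_one₀ h0.le hu.2 (by norm_num : 3 ≠ 0)]
  have h1 : HasDerivAt (fun u : ℝ => 1 - u^3) (-(3 * u^2)) u := by
    simpa using (hasDerivAt_pow 3 u).const_sub 1
  exact h1.rpow_const (Or.inl h.ne')

lemma psi_mem {u : ℝ} (hu : u ∈ Ioo cc 1) : psi u ∈ Ioo 0 cc := by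
  have h0 : 0 < u := lt_trans cc_pos hu.1
  have h : (0:ℝ) < 1 - u^3 := by nlinarith [pow_lt_one₀ h0.le hu.2 (by norm_num : 3 ≠ 0)]
  constructor
  · exact Real.rpow_pos_of_pos h _
  · have hcube : (psi u)^3 < cc^3 := by
      rw [psi_cube h0.le hu.2.le, cc_cube]
      have : cc^3 < u^3 := pow_lt_pow_left₀ hu.1 cc_pos.le (by norm_num)
      rw [cc_cube] at this
      linarith
    exact lt_of_pow_lt_pow_left₀ 3 cc_pos.le hcube

lemma psi_inj : Set.InjOn psi (Ioo cc 1) := by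
  intro a ha b hb h
  have ha0 : 0 < a := lt_trans cc_pos ha.1
  have hb0 : 0 < b := lt_trans cc_pos hb.1
  have e : 1 - a^3 = 1 - b^3 := by
    rw [← psi_cube ha0.le ha.2.le, ← psi_cube hb0.le hb.2.le, h]
  have h3 : a^3 = b^3 := by linarith
  rcases lt_trichotomy a b with hlt | heq | hgt
  · exact absurd h3 (ne_of_lt (pow_lt_pow_left₀ hlt ha0.le (by norm_num)))
  · exact heq
  · exact absurd h3.symm (ne_of_lt (pow_lt_pow_left₀ hgt hb0.le (by norm_num)))

lemma psi_image : psi '' (Ioo cc 1) = Ioo 0 cc := by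
  apply Subset.antisymm
  · rintro _ ⟨u, hu, rfl⟩; exact psi_mem hu
  · have hcont : ContinuousOn psi (Icc cc 1) := by
      apply ContinuousOn.rpow_const (by fun_prop)
      intro x _
      exact Or.inr (by norm_num)
    have hIv := intermediate_value_Ioo' cc_lt_one.le hcont
    have h1 : psi 1 = 0 := by
      rw [psi]; norm_num
    have hc : psi cc = cc := by
      rw [psi, show 1 - cc^3 = 1/2 by rw [cc_cube]; norm_num,
        show (1/2 : ℝ) = 2⁻¹ by norm_num, ← Real.rpow_neg_one 2,
        ← Real.rpow_mul (by norm_num : (0:ℝ) ≤ 2), cc]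
      norm_num
    rw [h1, hc] at hIv
    exact hIv

lemma step4 : ∫ u in Ioo (0:ℝ) cc, (1 - u^3) ^ (-2/3 : ℝ)
    = ∫ u in Ioo cc 1, (1 - u^3) ^ (-2/3 : ℝ) := by
  rw [← psi_image, integral_image_eq_integral_abs_deriv_smul measurableSet_Ioo
    (fun u hu => (psi_hasDerivAt hu).hasDerivWithinAt) psi_inj]
  apply setIntegral_congr_fun measurableSet_Ioo
  intro u hu
  have h0 : 0 < u := lt_trans cc_pos hu.1
  have h : (0:ℝ) < 1 - u^3 := by nlinarith [pow_lt_one₀ h0.le hu.2 (by norm_num : 3 ≠ 0)]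
  simp only [smul_eq_mul]
  have e1 : 1 - (psi u)^3 = u^3 := by rw [psi_cube h0.le hu.2.le]; ring
  have e2 : |(-(3*u^2) * ((1:ℝ)/3) * (1 - u^3) ^ (((1:ℝ)/3) - 1))|
      = u^2 * (1 - u^3) ^ (-2/3 : ℝ) := by
    rw [show (((1:ℝ)/3) - 1) = (-2/3 : ℝ) by norm_num, abs_mul, abs_mul, abs_neg,
      abs_of_nonneg (by positivity : (0:ℝ) ≤ 3*u^2),
      abs_of_nonneg (by norm_num : (0:ℝ) ≤ (1:ℝ)/3),
      abs_of_nonneg (Real.rpow_nonneg h.le _)]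
    ring
  have e3 : (u^3 : ℝ) ^ (-2/3 : ℝ) = u ^ (-2 : ℝ) := by
    rw [← Real.rpow_natCast u 3, ← Real.rpow_mul h0.le]; norm_num
  have e4 : (u:ℝ)^2 * u ^ (-2:ℝ) = 1 := by
    rw [← Real.rpow_natCast u 2, ← Real.rpow_add h0]; norm_num
  rw [e2, e1, e3,
    show u^2 * (1 - u^3) ^ (-2/3 : ℝ) * u ^ (-2:ℝ)
      = (u^2 * u ^ (-2:ℝ)) * (1 - u^3) ^ (-2/3 : ℝ) from by ring, e4, one_mul]

noncomputable def rt3 : ℝ → ℝ := fun x => x ^ ((1:ℝ)/3)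

lemma rt3_cube {x : ℝ} (hx : 0 ≤ x) : (rt3 x)^3 = x := by
  rw [rt3, ← Real.rpow_natCast (x ^ ((1:ℝ)/3)) 3, ← Real.rpow_mul hx,
    show ((1:ℝ)/3) * ((3:ℕ):ℝ) = 1 by push_cast; norm_num, Real.rpow_one]

lemma rt3_inj : Set.InjOn rt3 (Ioo (0:ℝ) 1) := by
  intro a ha b hb h
  have := congrArg (fun y : ℝ => y^3) h
  simpa [rt3_cube ha.1.le, rt3_cube hb.1.le] using this

lemma rt3_image : rt3 '' (Ioo (0:ℝ) 1) = Ioo 0 1 := by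
  apply Subset.antisymm
  · rintro _ ⟨x, hx, rfl⟩
    exact ⟨Real.rpow_pos_of_pos hx.1 _,
      Real.rpow_lt_one hx.1.le hx.2 (by norm_num)⟩
  · have hcont : ContinuousOn rt3 (Icc (0:ℝ) 1) :=
      ContinuousOn.rpow_const (by fun_prop) (fun x _ => Or.inr (by norm_num))
    have hIv := intermediate_value_Ioo zero_le_one hcont
    have h0 : rt3 0 = 0 := by
      rw [rt3, Real.zero_rpow (by norm_num)]
    have h1 : rt3 1 = 1 := by rw [rt3, Real.one_rpow]
    rw [h0, h1] at hIv
    exact hIv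

lemma rt3_hasDerivAt {x : ℝ} (hx : x ∈ Ioo (0:ℝ) 1) :
    HasDerivAt rt3 (((1:ℝ)/3) * x ^ (((1:ℝ)/3) - 1)) x :=
  Real.hasDerivAt_rpow_const (Or.inl hx.1.ne')

lemma step5_integrand {x : ℝ} (hx : x ∈ Ioo (0:ℝ) 1) :
    |((1:ℝ)/3) * x ^ (((1:ℝ)/3) - 1)| • (1 - (rt3 x)^3) ^ (-2/3 : ℝ)
      = (1/3 : ℝ) * (x ^ ((1:ℝ)/3 - 1) * (1-x) ^ ((1:ℝ)/3 - 1)) := by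
  have h1 : (0:ℝ) ≤ x ^ (((1:ℝ)/3) - 1) := Real.rpow_nonneg hx.1.le _
  rw [smul_eq_mul, abs_mul, abs_of_nonneg (by norm_num : (0:ℝ) ≤ (1:ℝ)/3),
    abs_of_nonneg h1, rt3_cube hx.1.le,
    show (-2/3 : ℝ) = (1:ℝ)/3 - 1 by norm_num]
  ring

lemma M_value : ∫ u in Ioo (0:ℝ) 1, (1 - u^3) ^ (-2/3 : ℝ)
    = (1/3) * (Real.Gamma (1/3) * Real.Gamma (1/3) / Real.Gamma (2/3)) := by
  rw [← rt3_image, integral_image_eq_integral_abs_deriv_smul measurableSet_Ioo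
    (fun x hx => (rt3_hasDerivAt hx).hasDerivWithinAt) rt3_inj,
    setIntegral_congr_fun measurableSet_Ioo (fun x hx => step5_integrand hx),
    integral_const_mul, real_beta (by norm_num : (0:ℝ) < 1/3) (by norm_num : (0:ℝ) < 1/3),
    show (1/3 : ℝ) + 1/3 = 2/3 by norm_num]

lemma M_integrable : IntegrableOn (fun u : ℝ => (1 - u^3) ^ (-2/3 : ℝ)) (Ioo 0 1) := by
  have h := (integrableOn_image_iff_integrableOn_abs_deriv_smul measurableSet_Ioo
    (fun x hx => (rt3_hasDerivAt hx).hasDerivWithinAt) rt3_inj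
    (fun u : ℝ => (1 - u^3) ^ (-2/3 : ℝ))).mpr ?_
  · rwa [rt3_image] at h
  · have hb := (real_beta_integrable (by norm_num : (0:ℝ) < 1/3)
      (by norm_num : (0:ℝ) < 1/3)).const_mul (1/3 : ℝ)
    exact MeasureTheory.IntegrableOn.congr_fun hb
      (fun x hx => (step5_integrand hx).symm) measurableSet_Ioo

lemma M_split : ∫ u in Ioo (0:ℝ) 1, (1 - u^3) ^ (-2/3 : ℝ)
    = (∫ u in Ioo (0:ℝ) cc, (1 - u^3) ^ (-2/3 : ℝ))
      + ∫ u in Ioo cc 1, (1 - u^3) ^ (-2/3 : ℝ) := by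
  have hsplit : Ioo (0:ℝ) 1 = Ioc 0 cc ∪ Ioo cc 1 :=
    (Ioc_union_Ioo_eq_Ioo cc_pos.le cc_lt_one).symm
  have hdisj : Disjoint (Ioc (0:ℝ) cc) (Ioo cc 1) := by
    rw [Set.disjoint_left]
    rintro x ⟨_, hx2⟩ ⟨hx3, _⟩
    exact absurd hx2 (not_le.mpr hx3)
  have hsub1 : Ioc (0:ℝ) cc ⊆ Ioo 0 1 :=
    fun x hx => ⟨hx.1, lt_of_le_of_lt hx.2 cc_lt_one⟩
  have hsub2 : Ioo cc 1 ⊆ Ioo (0:ℝ) 1 := fun x hx => ⟨lt_trans cc_pos hx.1, hx.2⟩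
  rw [hsplit, setIntegral_union hdisj measurableSet_Ioo
    (M_integrable.mono_set hsub1) (M_integrable.mono_set hsub2)]
  congr 1
  exact (setIntegral_congr_set Ioo_ae_eq_Ioc).symm

lemma summable_abs_stmt : Summable (fun n : ℕ =>
    |risingFactorial (2 / 3) n / ((-8 : ℝ) ^ n * risingFactorial (7 / 6) n)|) := by
  apply Summable.of_nonneg_of_le (fun n => abs_nonneg _) (fun n => ?_)
    (summable_geometric_of_lt_one (by norm_num : (0:ℝ) ≤ 1/8) (by norm_num))
  have hrf76 : (0:ℝ) < risingFactorial (7/6) n := rf_pos (by norm_num) n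
  have hrf23 : (0:ℝ) < risingFactorial (2/3) n := rf_pos (by norm_num) n
  have h23 : risingFactorial (2/3) n ≤ risingFactorial (7/6) n :=
    rf_le_rf (by norm_num) (by norm_num) n
  rw [abs_div, abs_mul, abs_pow, show |(-8:ℝ)| = 8 by norm_num,
    abs_of_nonneg hrf76.le, abs_of_nonneg hrf23.le, div_le_iff₀ (by positivity)]
  calc risingFactorial (2/3) n ≤ risingFactorial (7/6) n := h23
    _ = 1 * risingFactorial (7/6) n := (one_mul _).symm
    _ = (1/8 : ℝ)^n * 8^n * risingFactorial (7/6) n := by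
        rw [← mul_pow]; norm_num
    _ = (1/8 : ℝ)^n * (8^n * risingFactorial (7/6) n) := by ring

theorem stmt14 :
    Summable (fun n : ℕ =>
      |risingFactorial (2 / 3) n / ((-8 : ℝ) ^ n * risingFactorial (7 / 6) n)|) ∧
    ∑' n : ℕ, risingFactorial (2 / 3) n / ((-8 : ℝ) ^ n * risingFactorial (7 / 6) n) =
      Real.sqrt 3 * (2 : ℝ) ^ ((2 : ℝ) / 3) * (Real.Gamma (1 / 3)) ^ 3 / (18 * π) := by
  refine ⟨summable_abs_stmt, ?_⟩
  set V : ℝ := ∫ s in Ioo (0:ℝ) 1, (9 - s^6) ^ (-2/3 : ℝ) with hV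
  set G : ℝ := Real.Gamma (1/3) with hG
  set H : ℝ := Real.Gamma (2/3) with hH
  have hGpos : 0 < G := Real.Gamma_pos_of_pos (by norm_num)
  have hHpos : 0 < H := Real.Gamma_pos_of_pos (by norm_num)
  have hπ := Real.pi_pos
  have hsq3 : (0:ℝ) < Real.sqrt 3 := Real.sqrt_pos.mpr (by norm_num)
  have h13pos : (0:ℝ) < 2 ^ ((1:ℝ)/3) := Real.rpow_pos_of_pos (by norm_num) _
  have h21 : (2:ℝ) ^ ((1:ℝ)/3) * 2 ^ ((2:ℝ)/3) = 2 := by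
    rw [← Real.rpow_add (by norm_num : (0:ℝ) < 2),
      show (1:ℝ)/3 + 2/3 = 1 by norm_num, Real.rpow_one]
  -- the series equals 4 V
  have hS : ∑' n : ℕ, risingFactorial (2 / 3) n / ((-8 : ℝ) ^ n * risingFactorial (7 / 6) n)
      = 4 * V := by
    rw [step1, step2, hV, integral_const_mul]
  -- the u-integral over (0,cc) equals 3·2^{1/3}·V
  have h3 : ∫ u in Ioo (0:ℝ) cc, (1 - u^3) ^ (-2/3 : ℝ) = 3 * 2 ^ ((1:ℝ)/3) * V := by
    rw [step3, hV, integral_const_mul]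
  -- the Gamma expression
  have hM2 : (1/3 : ℝ) * (G * G / H) = 2 * (3 * 2 ^ ((1:ℝ)/3) * V) := by
    rw [hG, hH, ← M_value, M_split, ← step4, h3]
    ring
  -- reflection formula
  have hGH : G * H = 2 * π / Real.sqrt 3 := by
    have hr := Real.Gamma_mul_Gamma_one_sub (1/3 : ℝ)
    rw [show (1 : ℝ) - 1/3 = 2/3 by norm_num] at hr
    rw [show π * (1/3 : ℝ) = π / 3 by ring, Real.sin_pi_div_three] at hr
    rw [hG, hH, hr, div_eq_div_iff (by positivity : (Real.sqrt 3 / 2 : ℝ) ≠ 0) hsq3.ne']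
    ring
  have hsq3sq : Real.sqrt 3 * Real.sqrt 3 = 3 := Real.mul_self_sqrt (by norm_num)
  -- final algebra
  rw [hS]
  have hVval : 36 * π * (2 ^ ((1:ℝ)/3)) * V = Real.sqrt 3 * G^3 := by
    have hHval : H = 2 * π / (Real.sqrt 3 * G) := by
      rw [eq_div_iff (by positivity)]
      calc H * (Real.sqrt 3 * G) = Real.sqrt 3 * (G * H) := by ring
        _ = Real.sqrt 3 * (2 * π / Real.sqrt 3) := by rw [hGH]
        _ = 2 * π := by field_simp
    have e1 : G * G / H = Real.sqrt 3 * G^3 / (2 * π) := by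
      rw [hHval]
      field_simp
    rw [e1] at hM2
    have h6 : Real.sqrt 3 * G^3 / (2*π) = 18 * 2 ^ ((1:ℝ)/3) * V := by linarith
    rw [div_eq_iff (by positivity : (2*π : ℝ) ≠ 0)] at h6
    linear_combination -h6
  rw [eq_div_iff (by positivity : (18:ℝ) * π ≠ 0)]
  linear_combination (2 ^ ((2:ℝ)/3)) * hVval - 36 * π * V * h21
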